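/- Let a : ℤ → ℂ^{r×r} be finitely supported and m ∈ ℕ. Suppose S_a p⃗_m = 2^{-m} p⃗_m for some 1×r vector polynomial p⃗_m of exact degree m. Then the mask a has order m+1 sum rules with respect to any finitely supported υ : ℤ → ℂ^{1×r} satisfying υ̂^{(j)}(0) = j! i^j p⃗_m^{(m−j)}(0) for j = 0,…,m; in particular υ̂(0) = p⃗_m^{(m)}(0) ≠ 0. -/

import Mathlib

open Complex Polynomial

/-- Symbol (Fourier series) of a scalar sequence. -/
noncomputable def symb (u : ℤ → ℂ) (ξ : ℂ) : ℂ :=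
  ∑ᶠ k : ℤ, u k * Complex.exp (-Complex.I * k * ξ)

/-- Entrywise symbol of a matrix-valued sequence. -/
noncomputable def symbM {r : ℕ} (a : ℤ → Fin r → Fin r → ℂ) (i ℓ : Fin r) (ξ : ℂ) : ℂ :=
  ∑ᶠ k : ℤ, a k i ℓ * Complex.exp (-Complex.I * k * ξ)

/-- Vector subdivision operator on row-vector sequences. -/
noncomputable def sd {r : ℕ} (a : ℤ → Fin r → Fin r → ℂ) (w : ℤ → Fin r → ℂ) :
    ℤ → Fin r → ℂ :=
  fun j ℓ => 2 * ∑ᶠ k : ℤ, ∑ i : Fin r, w k i * a (j - 2 * k) i ℓ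

open Finset

lemma hasDerivAt_exp_mul' (μ ξ : ℂ) :
    HasDerivAt (fun ξ : ℂ => Complex.exp (μ * ξ)) (μ * Complex.exp (μ * ξ)) ξ := by
  simpa [mul_comm, Function.comp_def] using (Complex.hasDerivAt_exp (μ * ξ)).comp ξ ((hasDerivAt_id ξ).const_mul μ)

lemma iteratedDeriv_sum_exp' {ι : Type*} (F : Finset ι) (c μ : ι → ℂ) (j : ℕ) :
    iteratedDeriv j (fun ξ : ℂ => ∑ t ∈ F, c t * Complex.exp (μ t * ξ)) =
      fun ξ => ∑ t ∈ F, c t * μ t ^ j * Complex.exp (μ t * ξ) := by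
  induction j with
  | zero => simp [iteratedDeriv_zero]
  | succ n ih =>
      rw [iteratedDeriv_succ, ih]
      funext ξ
      rw [deriv_fun_sum (fun t _ =>
        (((hasDerivAt_exp_mul' (μ t) ξ).const_mul (c t * μ t ^ n))).differentiableAt)]
      refine Finset.sum_congr rfl fun t _ => ?_
      rw [((hasDerivAt_exp_mul' (μ t) ξ).const_mul (c t * μ t ^ n)).deriv]
      ring

lemma master' {ι : Type*} (F : Finset ι) (c μ : ι → ℂ) (j : ℕ) (f : ℂ → ℂ)
    (hf : f = fun ξ => ∑ t ∈ F, c t * Complex.exp (μ t * ξ)) :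
    iteratedDeriv j f 0 = ∑ t ∈ F, c t * μ t ^ j := by
  rw [hf, iteratedDeriv_sum_exp']; simp

lemma eval_zero_iterate_derivative' (Q : Polynomial ℂ) (u : ℕ) :
    (derivative^[u] Q).eval 0 = (u.factorial : ℂ) * Q.coeff u := by
  rw [← coeff_zero_eq_eval_zero, Polynomial.coeff_iterate_derivative]
  simp [Nat.descFactorial_self u]

lemma taylor_eval' (Q : Polynomial ℂ) (j : ℕ) (h : Q.natDegree ≤ j) (x : ℂ) :
    Q.eval x = ∑ u ∈ range (j+1), (derivative^[u] Q).eval 0 / (u.factorial : ℂ) * x ^ u := by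
  rw [Polynomial.eval_eq_sum_range' (Nat.lt_succ_of_le h)]
  refine Finset.sum_congr rfl fun u _ => ?_
  rw [eval_zero_iterate_derivative']
  have : (u.factorial : ℂ) ≠ 0 := Nat.cast_ne_zero.mpr u.factorial_ne_zero
  field_simp

lemma iter_deriv_comp_add' (p : Polynomial ℂ) (b : ℂ) (d : ℕ) :
    derivative^[d] (p.comp (X + C b)) = (derivative^[d] p).comp (X + C b) := by
  induction d with
  | zero => simp
  | succ n ih =>
      rw [Function.iterate_succ_apply', ih, Polynomial.derivative_comp]
      rw [show derivative ((derivative^[n]) p) = derivative^[n+1] p from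
        (Function.iterate_succ_apply' derivative n p).symm]
      simp

lemma iter_deriv_comp_two' (p : Polynomial ℂ) (b : ℂ) (d : ℕ) :
    derivative^[d] (p.comp (C 2 * X + C b)) =
      C ((2:ℂ)^d) * ((derivative^[d] p).comp (C 2 * X + C b)) := by
  induction d with
  | zero => simp
  | succ n ih =>
      rw [Function.iterate_succ_apply', ih, derivative_C_mul, Polynomial.derivative_comp]
      rw [show derivative ((derivative^[n]) p) = derivative^[n+1] p from
        (Function.iterate_succ_apply' derivative n p).symm]
      simp; ring

lemma iter_deriv_sum' {ι : Type*} (s : Finset ι) (f : ι → Polynomial ℂ) (d : ℕ) :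
    derivative^[d] (∑ x ∈ s, f x) = ∑ x ∈ s, derivative^[d] (f x) := by
  induction d with
  | zero => simp
  | succ n ih =>
      rw [Function.iterate_succ_apply', ih, map_sum]
      exact Finset.sum_congr rfl fun x _ => (Function.iterate_succ_apply' _ _ _).symm

lemma comb (Pi : Polynomial ℂ) (m j : ℕ) (hj : j ≤ m) (hdeg : Pi.natDegree ≤ m) (x : ℂ) :
    ∑ s ∈ range (j+1), (j.choose s : ℂ) * 2^s * x^(j-s) * (-1)^s * (s.factorial:ℂ) *
        (derivative^[m-s] Pi).eval 0
      = (j.factorial:ℂ) * (-2)^j * (derivative^[m-j] Pi).eval (-x/2) := by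
  have hQdeg : (derivative^[m-j] Pi).natDegree ≤ j :=
    le_trans (Polynomial.natDegree_iterate_derivative _ _) (by omega)
  rw [taylor_eval' _ j hQdeg, Finset.mul_sum]
  conv_lhs => rw [← Finset.sum_range_reflect]
  apply Finset.sum_congr rfl
  intro u hu
  have hu' : u ≤ j := by simp at hu; omega
  have h1 : j + 1 - 1 - u = j - u := by omega
  have h2 : j - (j - u) = u := by omega
  have h3 : m - (j - u) = u + (m - j) := by omega
  rw [h1, h2, h3, Function.iterate_add_apply, Nat.choose_symm hu']
  obtain ⟨d, rfl⟩ : ∃ d, j = d + u := ⟨j - u, by omega⟩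
  simp only [Nat.add_sub_cancel]
  have hch : ((d+u).choose u : ℂ) * (u.factorial:ℂ) * (d.factorial:ℂ) = ((d+u).factorial : ℂ) := by
    exact_mod_cast congrArg (Nat.cast : ℕ → ℂ)
      (by simpa using Nat.choose_mul_factorial_mul_factorial (Nat.le_add_left u d))
  have hu0 : (u.factorial:ℂ) ≠ 0 := Nat.cast_ne_zero.mpr u.factorial_ne_zero
  set E := (derivative^[u] (derivative^[m - (d+u)] Pi)).eval 0
  have hx : (-x/2)^u = (-1:ℂ)^u * x^u / 2^u := by
    rw [div_pow, neg_pow]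
  have hp : ((-2:ℂ))^(d+u) = (-1)^d * 2^d * ((-1)^u * 2^u) := by
    rw [show ((-2:ℂ)) = -1*2 from by ring, mul_pow, pow_add, pow_add]; ring
  rw [hx, hp, ← hch]
  have h2 : (2:ℂ) ≠ 0 := two_ne_zero
  field_simp
  ring_nf
  rw [show u*2 = 2*u from by omega, pow_mul]
  norm_num


/-- if `S_a p⃗_m = 2^{-m} p⃗_m` for some vector polynomial `p⃗_m` of exact
degree `m`, then `a` has order `m+1` sum rules with respect to any finitely supported `υ`
with `υ̂^{(j)}(0) = j! i^j p⃗_m^{(m−j)}(0)` for `j = 0,…,m`; in particular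
`υ̂(0) = p⃗_m^{(m)}(0) ≠ 0`. -/
theorem stmt9 (r m : ℕ) (a : ℤ → Fin r → Fin r → ℂ)
    (ha : (Function.support a).Finite)
    (P : Fin r → Polynomial ℂ)
    (hPdeg : ∀ ℓ, (P ℓ).degree ≤ (m : ℕ)) (hPex : ∃ ℓ, (P ℓ).degree = (m : ℕ))
    (hEig : ∀ x : ℤ, ∀ ℓ : Fin r,
      sd a (fun k i => (P i).eval ((k : ℂ))) x ℓ = ((2 : ℂ) ^ m)⁻¹ * (P ℓ).eval ((x : ℂ))) :
    ∀ υ : ℤ → Fin r → ℂ, (Function.support υ).Finite →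
      (∀ j ≤ m, ∀ ℓ : Fin r,
        iteratedDeriv j (symb (fun k => υ k ℓ)) 0 =
          (Nat.factorial j : ℂ) * Complex.I ^ j *
            (Polynomial.derivative^[m - j] (P ℓ)).eval 0) →
      ((∀ ℓ : Fin r, symb (fun k => υ k ℓ) 0 =
          (Polynomial.derivative^[m] (P ℓ)).eval 0) ∧
        (fun ℓ => symb (fun k => υ k ℓ) 0) ≠ 0 ∧
        (∀ j ≤ m, ∀ ℓ : Fin r,
          iteratedDeriv j
            (fun ξ : ℂ => (∑ i : Fin r, symb (fun k => υ k i) (2 * ξ) * symbM a i ℓ ξ) -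
              symb (fun k => υ k ℓ) ξ) 0 = 0) ∧
        (∀ j ≤ m, ∀ ℓ : Fin r,
          iteratedDeriv j
            (fun ξ : ℂ => ∑ i : Fin r, symb (fun k => υ k i) (2 * ξ) *
              symbM a i ℓ (ξ + (Real.pi : ℂ))) 0 = 0)) := by
  classical
  intro υ hυ hmom
  set T : Finset ℤ := hυ.toFinset with hTdef
  set S : Finset ℤ := ha.toFinset with hSdef
  have hSmem : ∀ {n : ℤ}, n ∉ S → ∀ i ℓ', a n i ℓ' = 0 := by
    intro n hn i ℓ'
    by_contra h
    exact hn (ha.mem_toFinset.mpr (fun hz => h (by rw [hz]; rfl)))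
  have hdeg' : ∀ i, (P i).natDegree ≤ m := fun i => Polynomial.natDegree_le_iff_degree_le.mpr (hPdeg i)
  -- symbols as finite sums
  have hsymb : ∀ (i : Fin r), symb (fun k => υ k i) =
      fun ξ => ∑ k ∈ T, υ k i * Complex.exp ((-Complex.I * (k:ℂ)) * ξ) := by
    intro i
    funext ξ
    apply finsum_eq_sum_of_support_subset
    intro k hk
    simp only [Function.mem_support] at hk
    have : υ k i ≠ 0 := fun h => hk (by rw [h]; ring)
    exact hυ.mem_toFinset.mpr (fun hz => this (by rw [hz]; rfl))
  have hsymbM : ∀ (i ℓ : Fin r), symbM a i ℓ =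
      fun ξ => ∑ n ∈ S, a n i ℓ * Complex.exp ((-Complex.I * (n:ℂ)) * ξ) := by
    intro i ℓ
    funext ξ
    apply finsum_eq_sum_of_support_subset
    intro n hn
    simp only [Function.mem_support] at hn
    have : a n i ℓ ≠ 0 := fun h => hn (by rw [h]; ring)
    exact ha.mem_toFinset.mpr (fun hz => this (by rw [hz]; rfl))
  -- moments of υ
  have hw : ∀ s ≤ m, ∀ i, ∑ k ∈ T, υ k i * (k:ℂ)^s =
      (-1:ℂ)^s * (s.factorial:ℂ) * (derivative^[m-s] (P i)).eval 0 := by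
    intro s hs i
    have h1 := hmom s hs i
    rw [master' T (fun k => υ k i) (fun k => -Complex.I * (k:ℂ)) s _ (hsymb i)] at h1
    have h2 : ∀ k ∈ T, υ k i * (-Complex.I * (k:ℂ))^s = (-Complex.I)^s * (υ k i * (k:ℂ)^s) :=
      fun k _ => by rw [mul_pow]; ring
    rw [Finset.sum_congr rfl h2, ← Finset.mul_sum] at h1
    have hiz : (-Complex.I)^s ≠ 0 := pow_ne_zero _ (by simp [Complex.I_ne_zero])
    apply mul_left_cancel₀ hiz
    rw [h1]
    have h3 : (-Complex.I)^s * (-1:ℂ)^s = Complex.I^s := by rw [← mul_pow]; norm_num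
    rw [show (-Complex.I)^s * ((-1:ℂ)^s * (s.factorial:ℂ) * (derivative^[m-s] (P i)).eval 0)
      = ((-Complex.I)^s * (-1:ℂ)^s) * ((s.factorial:ℂ) * (derivative^[m-s] (P i)).eval 0) from by
        ring, h3]
    ring
  -- the polynomial identity
  have hLR : ∀ ε : ℤ, ε = 0 ∨ ε = 1 → ∀ ℓ,
      (C (2:ℂ) * ∑ n ∈ S.filter (fun n => n % 2 = ε), ∑ i,
          C (a n i ℓ) * (P i).comp (X + C (-((((n - ε)/2 : ℤ) : ℤ) : ℂ)))) =
      C ((2:ℂ)^m)⁻¹ * (P ℓ).comp (C 2 * X + C ((ε:ℤ):ℂ)) := by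
    intro ε hε ℓ
    apply Polynomial.eq_of_infinite_eval_eq
    have key : ∀ y : ℤ, eval ((y:ℤ):ℂ)
        (C (2:ℂ) * ∑ n ∈ S.filter (fun n => n % 2 = ε), ∑ i,
          C (a n i ℓ) * (P i).comp (X + C (-((((n - ε)/2 : ℤ) : ℤ) : ℂ)))) =
        eval ((y:ℤ):ℂ) (C ((2:ℂ)^m)⁻¹ * (P ℓ).comp (C 2 * X + C ((ε:ℤ):ℂ))) := by
      intro y
      have h := hEig (2*y+ε) ℓ
      unfold sd at h
      set K : Finset ℤ := (S.filter (fun n => n % 2 = ε)).image (fun n => y - (n-ε)/2) with hK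
      have hsupp : Function.support
          (fun k : ℤ => ∑ i, eval ((k:ℤ):ℂ) (P i) * a (2*y+ε-2*k) i ℓ) ⊆ ↑K := by
        intro k hk
        simp only [Function.mem_support] at hk
        have hex : ∃ i, a (2*y+ε-2*k) i ℓ ≠ 0 := by
          by_contra hno
          push_neg at hno
          apply hk
          exact Finset.sum_eq_zero (fun i _ => by rw [hno i]; ring)
        obtain ⟨i, hi⟩ := hex
        have hnS : (2*y+ε-2*k) ∈ S := by
          by_contra hns
          exact hi (hSmem hns i ℓ)
        simp only [hK, Finset.coe_image, Set.mem_image, Finset.mem_coe, Finset.mem_filter]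
        exact ⟨2*y+ε-2*k, ⟨hnS, by omega⟩, by omega⟩
      rw [finsum_eq_sum_of_support_subset _ hsupp] at h
      rw [hK, Finset.sum_image (fun n₁ h₁ n₂ h₂ hee => by
        simp only [Finset.coe_filter, Finset.mem_coe, Finset.mem_filter, Set.mem_setOf_eq] at h₁ h₂ hee; omega)] at h
      simp only [eval_mul, eval_C, Polynomial.eval_finset_sum, eval_comp, eval_add, eval_X,
        eval_neg]
      rw [show (((2*y+ε : ℤ)):ℂ) = 2*(y:ℂ)+(ε:ℂ) from by push_cast; ring] at h
      rw [← h]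
      congr 1
      apply Finset.sum_congr rfl
      intro n hn
      apply Finset.sum_congr rfl
      intro i _
      simp only [Finset.mem_filter] at hn
      have harg : 2*y+ε-2*(y-(n-ε)/2) = n := by omega
      rw [harg]
      have hpt : (((y - (n-ε)/2 : ℤ)):ℂ) = (y:ℂ) + -((((n - ε)/2 : ℤ) : ℂ)) := by
        push_cast
        ring
      rw [hpt, mul_comm]
    apply Set.Infinite.mono (s := Set.range ((↑) : ℤ → ℂ))
    · rintro x ⟨y, rfl⟩
      exact key y
    · exact Set.infinite_range_of_injective (fun x y hxy => by exact_mod_cast hxy)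

  -- key moment identity for the mask
  have hKey : ∀ j ≤ m, ∀ ℓ, ∀ ε : ℤ, ε = 0 ∨ ε = 1 →
      ∑ n ∈ S.filter (fun n => n % 2 = ε), ∑ i,
          a n i ℓ * (derivative^[m-j] (P i)).eval (-(n:ℂ)/2)
        = ((2:ℂ)^m)⁻¹ * 2^(m-j) * (derivative^[m-j] (P ℓ)).eval 0 / 2 := by
    intro j hj ℓ ε hε
    have h := congrArg (fun p : Polynomial ℂ => eval (-((ε:ℤ):ℂ)/2) (derivative^[m-j] p))
      (hLR ε hε ℓ)
    simp only [Polynomial.iterate_derivative_C_mul, iter_deriv_sum', iter_deriv_comp_add',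
      iter_deriv_comp_two'] at h
    simp only [eval_mul, eval_C, Polynomial.eval_finset_sum, eval_comp, eval_add, eval_X,
      eval_neg] at h
    rw [show 2*(-((ε:ℤ):ℂ)/2) + ((ε:ℤ):ℂ) = 0 from by ring] at h
    rw [Finset.sum_congr rfl (fun n hn => Finset.sum_congr rfl (fun i _ => by
      simp only [Finset.mem_filter] at hn
      obtain ⟨c, hc⟩ : ∃ c, n - ε = 2*c := ⟨(n-ε)/2, by omega⟩
      have h1 : (n - ε)/2 = c := by omega
      have h2 : ((c:ℤ):ℂ) = (((n:ℤ):ℂ) - ((ε:ℤ):ℂ))/2 := by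
        have := congrArg (fun z : ℤ => ((z:ℤ):ℂ)) hc
        push_cast at this ⊢
        linear_combination -this / 2
      rw [h1, show -((ε:ℤ):ℂ)/2 + -((c:ℤ):ℂ) = -((n:ℤ):ℂ)/2 from by rw [h2]; ring]))] at h
    linear_combination h / 2

  -- combined parity-wise identity
  have hC : ∀ j ≤ m, ∀ ℓ, ∀ ε : ℤ, ε = 0 ∨ ε = 1 →
      ∑ n ∈ S.filter (fun n => n % 2 = ε), ∑ i : Fin r, ∑ k ∈ T,
          υ k i * a n i ℓ * (2*(k:ℂ)+(n:ℂ))^j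
      = (j.factorial:ℂ) * (-2:ℂ)^j *
          (((2:ℂ)^m)⁻¹ * 2^(m-j) * (derivative^[m-j] (P ℓ)).eval 0 / 2) := by
    intro j hj ℓ ε hε
    have step1 : ∀ n ∈ S.filter (fun n => n % 2 = ε), ∀ i : Fin r,
        ∑ k ∈ T, υ k i * a n i ℓ * (2*(k:ℂ)+(n:ℂ))^j
        = a n i ℓ * ((j.factorial:ℂ) * (-2:ℂ)^j * (derivative^[m-j] (P i)).eval (-(n:ℂ)/2)) := by
      intro n hn i
      have hb : ∀ k : ℤ, (2*(k:ℂ)+(n:ℂ))^j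
          = ∑ s ∈ range (j+1), (2*(k:ℂ))^s * (n:ℂ)^(j-s) * (j.choose s : ℂ) :=
        fun k => add_pow _ _ _
      rw [Finset.sum_congr rfl (fun k (_ : k ∈ T) => by rw [hb k, Finset.mul_sum])]
      rw [Finset.sum_comm]
      have hinner : ∀ s ∈ range (j+1),
          ∑ k ∈ T, υ k i * a n i ℓ * ((2*(k:ℂ))^s * (n:ℂ)^(j-s) * (j.choose s:ℂ))
          = ((j.choose s : ℂ) * 2^s * (n:ℂ)^(j-s) * (-1)^s * (s.factorial:ℂ) *
              (derivative^[m-s] (P i)).eval 0) * a n i ℓ := by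
        intro s hs
        have hsm : s ≤ m := le_trans (by simp at hs; omega) hj
        rw [Finset.sum_congr rfl (fun k (_ : k ∈ T) => show
          υ k i * a n i ℓ * ((2*(k:ℂ))^s * (n:ℂ)^(j-s) * (j.choose s:ℂ))
            = ((j.choose s:ℂ) * 2^s * (n:ℂ)^(j-s) * a n i ℓ) * (υ k i * (k:ℂ)^s) from by
          rw [mul_pow]; ring)]
        rw [← Finset.mul_sum, hw s hsm i]
        ring
      rw [Finset.sum_congr rfl hinner, ← Finset.sum_mul, comb (P i) m j hj (hdeg' i) (n:ℂ)]
      ring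
    rw [Finset.sum_congr rfl (fun n hn => Finset.sum_congr rfl (fun i _ => step1 n hn i))]
    rw [Finset.sum_congr rfl (fun n (_ : n ∈ S.filter (fun n => n % 2 = ε)) =>
      Finset.sum_congr rfl (fun i (_ : i ∈ (univ : Finset (Fin r))) => show
        a n i ℓ * ((j.factorial:ℂ) * (-2:ℂ)^j * (derivative^[m-j] (P i)).eval (-(n:ℂ)/2))
        = ((j.factorial:ℂ) * (-2:ℂ)^j) *
            (a n i ℓ * (derivative^[m-j] (P i)).eval (-(n:ℂ)/2)) from by ring))]
    simp only [← Finset.mul_sum]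
    rw [hKey j hj ℓ ε hε]

  have hb1 : ∀ ℓ : Fin r, symb (fun k => υ k ℓ) 0 = (derivative^[m] (P ℓ)).eval 0 := by
    intro ℓ
    have h := hmom 0 (Nat.zero_le m) ℓ
    simpa [iteratedDeriv_zero] using h
  refine ⟨hb1, ?_, ?_, ?_⟩
  · obtain ⟨ℓ₀, hℓ₀⟩ := hPex
    intro h0
    have h1 : symb (fun k => υ k ℓ₀) 0 = 0 := congrFun h0 ℓ₀
    rw [hb1 ℓ₀, eval_zero_iterate_derivative'] at h1
    have hnz : (P ℓ₀) ≠ 0 := fun hz => by rw [hz] at hℓ₀; simp at hℓ₀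
    have hnd : (P ℓ₀).natDegree = m := natDegree_eq_of_degree_eq_some hℓ₀
    have hco : (P ℓ₀).coeff m ≠ 0 := by
      rw [← hnd]
      exact Polynomial.leadingCoeff_ne_zero.mpr hnz
    have hfz : (m.factorial : ℂ) ≠ 0 := Nat.cast_ne_zero.mpr m.factorial_ne_zero
    rcases mul_eq_zero.mp h1 with h | h
    · exact hfz h
    · exact hco h
  · intro j hj ℓ
    have hf : (fun ξ : ℂ => (∑ i : Fin r, symb (fun k => υ k i) (2 * ξ) * symbM a i ℓ ξ) -
              symb (fun k => υ k ℓ) ξ)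
        = fun ξ => ∑ t ∈ ((Finset.univ ×ˢ (T ×ˢ S)).disjSum T),
            (Sum.elim (fun p : Fin r × ℤ × ℤ => υ p.2.1 p.1 * a p.2.2 p.1 ℓ)
              (fun k => -υ k ℓ)) t *
            Complex.exp ((Sum.elim
              (fun p : Fin r × ℤ × ℤ => -Complex.I * (2*((p.2.1:ℤ):ℂ)+((p.2.2:ℤ):ℂ)))
              (fun k => -Complex.I * ((k:ℤ):ℂ))) t * ξ) := by
      funext ξ
      rw [Finset.sum_disjSum]
      simp only [Sum.elim_inl, Sum.elim_inr]
      rw [Finset.sum_product, sub_eq_add_neg]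
      congr 1
      · refine Finset.sum_congr rfl fun i _ => ?_
        rw [hsymb i, hsymbM i ℓ]
        simp only
        rw [Finset.sum_mul_sum, Finset.sum_product]
        refine Finset.sum_congr rfl fun k _ => ?_
        refine Finset.sum_congr rfl fun n _ => ?_
        rw [mul_mul_mul_comm, ← Complex.exp_add]
        congr 1
        ring
      · rw [hsymb ℓ]
        simp only [neg_mul]
        rw [← Finset.sum_neg_distrib]
    rw [master' _ _ _ j _ hf]
    rw [Finset.sum_disjSum]
    simp only [Sum.elim_inl, Sum.elim_inr]
    simp only [Finset.sum_product]
    have hfac : ∀ (z c' : ℂ), c' * (-Complex.I * z)^j = (-Complex.I)^j * (c' * z^j) :=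
      fun z c' => by rw [mul_pow]; ring
    simp only [hfac]
    simp only [← Finset.mul_sum]
    rw [← mul_add]
    have hz : (∑ i : Fin r, ∑ k ∈ T, ∑ n ∈ S,
          υ k i * a n i ℓ * (2*((k:ℤ):ℂ)+((n:ℤ):ℂ))^j)
        + ∑ k ∈ T, -υ k ℓ * ((k:ℤ):ℂ)^j = 0 := by
      rw [Finset.sum_congr rfl (fun i (_ : i ∈ (Finset.univ : Finset (Fin r))) =>
        Finset.sum_comm (s := T) (t := S)
          (f := fun k n => υ k i * a n i ℓ * (2*((k:ℤ):ℂ)+((n:ℤ):ℂ))^j))]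
      rw [Finset.sum_comm (s := (Finset.univ : Finset (Fin r))) (t := S)]
      rw [← Finset.sum_filter_add_sum_filter_not S (fun n => n % 2 = 0)]
      have hf1 : S.filter (fun n => ¬ n % 2 = 0) = S.filter (fun n => n % 2 = 1) :=
        Finset.filter_congr (fun n _ => by constructor <;> omega)
      rw [hf1, hC j hj ℓ 0 (Or.inl rfl), hC j hj ℓ 1 (Or.inr rfl)]
      simp only [neg_mul]
      rw [Finset.sum_neg_distrib, hw j hj ℓ]
      have hpow : (2:ℂ)^(m-j) * 2^j = 2^m := by rw [← pow_add]; congr 1; omega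
      have hm2 : ((-2:ℂ))^j = (-1:ℂ)^j * 2^j := by
        rw [show ((-2:ℂ)) = -1 * 2 from by ring, mul_pow]
      have hne : ((2:ℂ)^m) ≠ 0 := pow_ne_zero _ two_ne_zero
      rw [hm2]
      field_simp
      linear_combination (2 * (-1:ℂ)^j * (j.factorial:ℂ) * (derivative^[m-j] (P ℓ)).eval 0) * hpow
    rw [hz, mul_zero]
  · intro j hj ℓ
    have epar : ∀ n : ℤ, Complex.exp (-Complex.I * ((n:ℤ):ℂ) * ((Real.pi:ℝ):ℂ)) = (-1:ℂ)^(n:ℤ) := by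
      intro n
      rw [show -Complex.I * ((n:ℤ):ℂ) * ((Real.pi:ℝ):ℂ)
          = ((n:ℤ):ℂ) * (-(((Real.pi:ℝ):ℂ) * Complex.I)) from by ring]
      rw [Complex.exp_int_mul, Complex.exp_neg, Complex.exp_pi_mul_I]
      norm_num
    have hev : ∀ n : ℤ, n % 2 = 0 → ((-1:ℂ)^(n:ℤ)) = 1 := by
      intro n hn
      obtain ⟨q, rfl⟩ : ∃ q, n = 2*q := ⟨n/2, by omega⟩
      rw [zpow_mul]
      norm_num
    have hod : ∀ n : ℤ, n % 2 = 1 → ((-1:ℂ)^(n:ℤ)) = -1 := by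
      intro n hn
      obtain ⟨q, rfl⟩ : ∃ q, n = 2*q+1 := ⟨n/2, by omega⟩
      rw [zpow_add₀ (by norm_num : (-1:ℂ) ≠ 0), zpow_mul]
      norm_num
    have hf : (fun ξ : ℂ => ∑ i : Fin r, symb (fun k => υ k i) (2 * ξ) *
              symbM a i ℓ (ξ + ((Real.pi:ℝ):ℂ)))
        = fun ξ => ∑ t ∈ (Finset.univ ×ˢ (T ×ˢ S)),
            ((fun p : Fin r × ℤ × ℤ => υ p.2.1 p.1 * a p.2.2 p.1 ℓ * (-1:ℂ)^((p.2.2:ℤ))) t) *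
            Complex.exp ((fun p : Fin r × ℤ × ℤ =>
              -Complex.I * (2*((p.2.1:ℤ):ℂ)+((p.2.2:ℤ):ℂ))) t * ξ) := by
      funext ξ
      rw [Finset.sum_product]
      refine Finset.sum_congr rfl fun i _ => ?_
      rw [hsymb i, hsymbM i ℓ]
      simp only
      rw [Finset.sum_mul_sum, Finset.sum_product]
      refine Finset.sum_congr rfl fun k _ => ?_
      refine Finset.sum_congr rfl fun n _ => ?_
      rw [show -Complex.I * ((n:ℤ):ℂ) * (ξ + ((Real.pi:ℝ):ℂ))
          = (-Complex.I * ((n:ℤ):ℂ) * ((Real.pi:ℝ):ℂ)) + (-Complex.I * ((n:ℤ):ℂ)) * ξ from by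
        ring]
      rw [Complex.exp_add, epar n]
      rw [show υ k i * Complex.exp (-Complex.I * ((k:ℤ):ℂ) * (2*ξ)) *
            (a n i ℓ * ((-1:ℂ)^((n:ℤ)) * Complex.exp ((-Complex.I * ((n:ℤ):ℂ)) * ξ)))
          = (υ k i * a n i ℓ * (-1:ℂ)^((n:ℤ))) *
            (Complex.exp (-Complex.I * ((k:ℤ):ℂ) * (2*ξ)) *
              Complex.exp ((-Complex.I * ((n:ℤ):ℂ)) * ξ)) from by ring]
      rw [← Complex.exp_add]
      congr 2
      ring
    rw [master' _ _ _ j _ hf]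
    simp only [Finset.sum_product]
    have hfac : ∀ (z c' : ℂ), c' * (-Complex.I * z)^j = (-Complex.I)^j * (c' * z^j) :=
      fun z c' => by rw [mul_pow]; ring
    simp only [hfac]
    simp only [← Finset.mul_sum]
    have hz : (∑ i : Fin r, ∑ k ∈ T, ∑ n ∈ S,
          υ k i * a n i ℓ * (-1:ℂ)^((n:ℤ)) * (2*((k:ℤ):ℂ)+((n:ℤ):ℂ))^j) = 0 := by
      rw [Finset.sum_congr rfl (fun i (_ : i ∈ (Finset.univ : Finset (Fin r))) =>
        Finset.sum_comm (s := T) (t := S)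
          (f := fun k n => υ k i * a n i ℓ * (-1:ℂ)^((n:ℤ)) * (2*((k:ℤ):ℂ)+((n:ℤ):ℂ))^j))]
      rw [Finset.sum_comm (s := (Finset.univ : Finset (Fin r))) (t := S)]
      rw [← Finset.sum_filter_add_sum_filter_not S (fun n => n % 2 = 0)]
      have hf1 : S.filter (fun n => ¬ n % 2 = 0) = S.filter (fun n => n % 2 = 1) :=
        Finset.filter_congr (fun n _ => by constructor <;> omega)
      rw [hf1]
      rw [Finset.sum_congr rfl (fun n hn => Finset.sum_congr rfl (fun i _ =>
        Finset.sum_congr rfl (fun k _ => show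
          υ k i * a n i ℓ * (-1:ℂ)^((n:ℤ)) * (2*((k:ℤ):ℂ)+((n:ℤ):ℂ))^j
          = υ k i * a n i ℓ * (2*((k:ℤ):ℂ)+((n:ℤ):ℂ))^j from by
          rw [hev n (Finset.mem_filter.mp hn).2]; ring)))]
      rw [Finset.sum_congr (rfl : S.filter (fun n => n % 2 = 1) = S.filter (fun n => n % 2 = 1))
        (fun n hn => Finset.sum_congr rfl (fun i _ =>
        Finset.sum_congr rfl (fun k _ => show
          υ k i * a n i ℓ * (-1:ℂ)^((n:ℤ)) * (2*((k:ℤ):ℂ)+((n:ℤ):ℂ))^j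
          = -(υ k i * a n i ℓ * (2*((k:ℤ):ℂ)+((n:ℤ):ℂ))^j) from by
          rw [hod n (Finset.mem_filter.mp hn).2]; ring)))]
      simp only [Finset.sum_neg_distrib]
      rw [hC j hj ℓ 0 (Or.inl rfl), hC j hj ℓ 1 (Or.inr rfl)]
      ring
    rw [hz, mul_zero]
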